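/- Let 0 < m ≤ L and 1 − √(m/L) ≤ ρ < 1. Define α = (1+ρ)(1−ρ)²/m, β = ρ(L(1−ρ+2ρ²) − m(1+ρ))/((L−m)(3−ρ)), η = ρ(L(1−ρ²) − m(1+2ρ−ρ²))/((L−m)(3−ρ)(1−ρ²)) (assume m < L). Then the 2×2 matrix A + mBC, where A = [1+β, −β; 1, 0], B = [−α; 0], C = [1+η, −η], has spectral radius exactly ρ. -/

import Mathlib

open Matrix

lemma aux_spec_14 (ρ : ℝ) (h0 : 0 < ρ) (h1 : ρ < 1) :
    spectrum ℂ (!![(ρ:ℂ) + ρ^2, -ρ^3; 1, 0]) = {(ρ:ℂ), (ρ:ℂ)^2} := by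
  have hne : (ρ:ℂ) - ρ^2 ≠ 0 := by
    have : (ρ:ℝ) - ρ^2 ≠ 0 := by nlinarith
    simpa [sub_eq_zero, ← Complex.ofReal_pow] using fun h => this (by exact_mod_cast sub_eq_zero.mpr h)
  have hρne : (ρ:ℂ) ≠ 0 := by exact_mod_cast h0.ne'
  have h1ne : (1:ℂ) - ρ ≠ 0 := by
    rw [sub_ne_zero]; exact_mod_cast h1.ne'
  set P : Matrix (Fin 2) (Fin 2) ℂ := !![(ρ:ℂ), ρ^2; 1, 1] with hP
  set Q : Matrix (Fin 2) (Fin 2) ℂ := ((ρ:ℂ) - ρ^2)⁻¹ • !![(1:ℂ), -ρ^2; -1, ρ] with hQ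
  have hPQ : P * Q = 1 := by
    ext i j
    fin_cases i <;> fin_cases j <;>
      simp [hP, hQ, Matrix.mul_apply, Fin.sum_univ_two, Matrix.one_apply] <;>
      field_simp <;> ring
  have hQP : Q * P = 1 := by
    ext i j
    fin_cases i <;> fin_cases j <;>
      simp [hP, hQ, Matrix.mul_apply, Fin.sum_univ_two, Matrix.one_apply] <;>
      field_simp <;> ring
  set u : (Matrix (Fin 2) (Fin 2) ℂ)ˣ := ⟨P, Q, hPQ, hQP⟩ with hu
  have key : !![(ρ:ℂ) + ρ^2, -ρ^3; 1, 0] = (u : Matrix (Fin 2) (Fin 2) ℂ) * (Matrix.diagonal ![(ρ:ℂ), ρ^2]) * ((u⁻¹ : (Matrix (Fin 2) (Fin 2) ℂ)ˣ) : Matrix (Fin 2) (Fin 2) ℂ) := by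
    show _ = P * _ * Q
    ext i j
    fin_cases i <;> fin_cases j <;>
      simp [hP, hQ, Matrix.mul_apply, Fin.sum_univ_two, Matrix.diagonal, Matrix.vecHead, Matrix.vecTail] <;>
      field_simp <;> ring
  rw [key, spectrum.units_conjugate, spectrum_diagonal]
  ext z
  simp [Set.range, Fin.exists_fin_two]
  tauto

theorem stmt_14 (m L ρ : ℝ) (hm : 0 < m) (hmL : m < L)
    (hρ1 : 1 - Real.sqrt (m / L) ≤ ρ) (hρ2 : ρ < 1) :
    let α := (1 + ρ) * (1 - ρ) ^ 2 / m
    let β := ρ * (L * (1 - ρ + 2 * ρ ^ 2) - m * (1 + ρ)) / ((L - m) * (3 - ρ))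
    let η := ρ * (L * (1 - ρ ^ 2) - m * (1 + 2 * ρ - ρ ^ 2)) / ((L - m) * (3 - ρ) * (1 - ρ ^ 2))
    let A : Matrix (Fin 2) (Fin 2) ℝ := !![1 + β, -β; 1, 0]
    let B : Matrix (Fin 2) (Fin 1) ℝ := !![-α; 0]
    let C : Matrix (Fin 1) (Fin 2) ℝ := !![1 + η, -η]
    spectralRadius ℂ ((A + m • (B * C)).map (Complex.ofReal)) = ENNReal.ofReal ρ := by
  intro α β η A B C
  have hρ0 : 0 < ρ := by
    have h1 : m / L < 1 := (div_lt_one (hm.trans hmL)).mpr hmL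
    have h2 : Real.sqrt (m / L) < 1 := by
      rw [show (1:ℝ) = Real.sqrt 1 by simp]
      exact Real.sqrt_lt_sqrt (div_nonneg hm.le (hm.trans hmL).le) h1
    linarith
  have hm' : m ≠ 0 := ne_of_gt hm
  have hLm : L - m ≠ 0 := by linarith
  have h3ρ : 3 - ρ ≠ 0 := by linarith
  have h1ρ : 1 - ρ^2 ≠ 0 := by nlinarith
  have hM : A + m • (B * C) = !![ρ + ρ^2, -ρ^3; 1, 0] := by
    ext i j
    fin_cases i <;> fin_cases j <;>
      simp [A, B, C, α, β, η, Matrix.mul_apply, Fin.sum_univ_one] <;>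
      field_simp <;> ring
  have hMap : (A + m • (B * C)).map (Complex.ofReal) = !![(ρ:ℂ) + ρ^2, -ρ^3; 1, 0] := by
    rw [hM]
    ext i j
    fin_cases i <;> fin_cases j <;> simp [Matrix.map_apply]
  rw [hMap, spectralRadius, aux_spec_14 ρ hρ0 hρ2]
  have h1 : (⨆ k ∈ ({(ρ:ℂ), (ρ:ℂ)^2} : Set ℂ), (‖k‖₊ : ENNReal))
      = (‖(ρ:ℂ)‖₊ : ENNReal) ⊔ (‖(ρ:ℂ)^2‖₊ : ENNReal) := by
    rw [Set.insert_eq, iSup_union]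
    simp
  rw [h1]
  have h2 : (‖(ρ:ℂ)‖₊ : ENNReal) = ENNReal.ofReal ρ := by
    rw [← Complex.ofReal_pow] at *
    rw [Complex.nnnorm_real]
    rw [← Real.enorm_eq_ofReal hρ0.le, enorm_eq_nnnorm]
  have h3 : (‖(ρ:ℂ)^2‖₊ : ENNReal) = ENNReal.ofReal (ρ^2) := by
    rw [← Complex.ofReal_pow, Complex.nnnorm_real, ← Real.enorm_eq_ofReal (by positivity), enorm_eq_nnnorm]
  rw [h2, h3, sup_eq_left]
  exact ENNReal.ofReal_le_ofReal (by nlinarith)
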